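/- Let Ω ⊂ ℝ^r be compact. The Sliced 1-Wasserstein distance d_{SW_1}(P,Q) = ∫_{S^{r−1}} ∫_0^1 |F_{θ*_#P}^{[-1]}(t) − F_{θ*_#Q}^{[-1]}(t)| dt dσ(θ) is conditionally negative definite on the set of probability measures on Ω: for every n ∈ ℕ, all probability measures P_1, …, P_n on Ω and all real coefficients a_1, …, a_n with Σᵢ aᵢ = 0, one has Σ_{i,j=1}^n aᵢ aⱼ d_{SW_1}(P_i, P_j) ≤ 0. -/

import Mathlib

open MeasureTheory
open scoped RealInnerProductSpace

/-- The generalized inverse cumulative distribution function (quantile function) of a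
probability measure `μ` on `ℝ`: `F_μ^{[-1]}(t) = inf {x : F_μ(x) ≥ t}` where
`F_μ(x) = μ((−∞, x])`. -/
noncomputable def invCDF (μ : Measure ℝ) (t : ℝ) : ℝ :=
  sInf {x : ℝ | t ≤ (μ (Set.Iic x)).toReal}

/-- The uniform probability measure on the unit sphere `S^{r-1} ⊂ ℝ^r`
(the normalized surface measure). -/
noncomputable def uniformSphere (r : ℕ) :
    Measure (Metric.sphere (0 : EuclideanSpace ℝ (Fin r)) 1) :=
  ((volume : Measure (EuclideanSpace ℝ (Fin r))).toSphere Set.univ)⁻¹ •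
    (volume : Measure (EuclideanSpace ℝ (Fin r))).toSphere

/-- The Sliced 1-Wasserstein distance between probability measures on `ℝ^r`:
`d_{SW₁}(P,Q) = ∫_{S^{r−1}} ∫_0^1 |F_{θ*_#P}^{[-1]}(t) − F_{θ*_#Q}^{[-1]}(t)| dt dσ(θ)`. -/
noncomputable def slicedW1 {r : ℕ} (P Q : Measure (EuclideanSpace ℝ (Fin r))) : ℝ :=
  ∫ θ : Metric.sphere (0 : EuclideanSpace ℝ (Fin r)) 1,
    (∫ t in Set.Ioc (0 : ℝ) 1,
      |invCDF (P.map fun x => ⟪x, (θ : EuclideanSpace ℝ (Fin r))⟫) t -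
        invCDF (Q.map fun x => ⟪x, (θ : EuclideanSpace ℝ (Fin r))⟫) t|) ∂(uniformSphere r)

/-- **The Sliced 1-Wasserstein distance is conditionally negative definite.**
Let `Ω ⊂ ℝ^r` be compact.  For every `n`, all probability measures `P₁, …, Pₙ` on `Ω` and all
real coefficients `a₁, …, aₙ` with `∑ᵢ aᵢ = 0`, one has `∑_{i,j} aᵢ aⱼ d_{SW₁}(Pᵢ, Pⱼ) ≤ 0`. -/
lemma abs_cnd {n : ℕ} (s : Fin n → ℝ) (a : Fin n → ℝ) (ha : (∑ i, a i) = 0) :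
    (∑ i, ∑ j, a i * a j * |s i - s j|) ≤ 0 := by
  rcases isEmpty_or_nonempty (Fin n) with h | h
  · simp
  obtain ⟨m, hm⟩ : ∃ m : ℝ, ∀ i, m ≤ s i := by
    obtain ⟨i₀, hi₀⟩ := Finset.exists_min_image Finset.univ s ⟨Classical.arbitrary _, Finset.mem_univ _⟩
    exact ⟨s i₀, fun i => hi₀.2 i (Finset.mem_univ i)⟩
  set φ : Fin n → ℝ → ℝ := fun i => (Set.Ioc m (s i)).indicator (fun _ => (1:ℝ)) with hφ
  have hprod : ∀ i j, (fun x => φ i x * φ j x)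
      = (Set.Ioc m (min (s i) (s j))).indicator (fun _ => (1:ℝ)) := by
    intro i j
    funext x
    simp only [hφ, Set.indicator_apply, Set.mem_Ioc, le_min_iff]
    split_ifs <;> norm_num <;> tauto
  have hindint : ∀ c : ℝ, Integrable ((Set.Ioc m c).indicator (fun _ => (1:ℝ))) := by
    intro c
    refine (integrableOn_const ?_).integrable_indicator measurableSet_Ioc
    rw [Real.volume_Ioc]; exact ENNReal.ofReal_ne_top
  have hφφint : ∀ i j, Integrable (fun x => φ i x * φ j x) := by
    intro i j; rw [hprod i j]; exact hindint _
  have hprodint : ∀ i j, ∫ x, φ i x * φ j x = min (s i) (s j) - m := by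
    intro i j
    rw [hprod i j, integral_indicator_const _ measurableSet_Ioc]
    simp [Real.volume_Ioc,
      ENNReal.toReal_ofReal (by simp [le_min_iff, hm i, hm j] : (0:ℝ) ≤ min (s i) (s j) - m)]
    exact ⟨hm i, hm j⟩
  have hmin : 0 ≤ ∑ i, ∑ j, a i * a j * (min (s i) (s j) - m) := by
    have hswap : ∑ i, ∑ j, a i * a j * (min (s i) (s j) - m)
        = ∫ x, (∑ i, a i * φ i x) ^ 2 := by
      have hexp : ∀ x : ℝ, (∑ i, a i * φ i x) ^ 2
          = ∑ i, ∑ j, (a i * a j) * (φ i x * φ j x) := by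
        intro x
        rw [sq, Finset.sum_mul_sum]
        exact Finset.sum_congr rfl fun i _ => Finset.sum_congr rfl fun j _ => by ring
      rw [integral_congr_ae (Filter.Eventually.of_forall hexp), integral_finset_sum _
        (fun i _ => integrable_finset_sum _ (fun j _ => ((hφφint i j).const_mul _)))]
      refine Finset.sum_congr rfl fun i _ => ?_
      rw [integral_finset_sum _ (fun j _ => ((hφφint i j).const_mul _))]
      exact Finset.sum_congr rfl fun j _ => by rw [integral_const_mul, hprodint]
    rw [hswap]
    exact integral_nonneg fun x => sq_nonneg _
  have h1 : ∀ c : Fin n → ℝ, ∑ i, ∑ j, a i * a j * c i = 0 := by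
    intro c
    have : ∀ i, ∑ j, a i * a j * c i = (a i * c i) * ∑ j, a j := by
      intro i; rw [Finset.mul_sum]; exact Finset.sum_congr rfl fun j _ => by ring
    simp [this, ha]
  have h2 : ∀ c : Fin n → ℝ, ∑ i, ∑ j, a i * a j * c j = 0 := by
    intro c
    have : ∀ i, ∑ j, a i * a j * c j = a i * ∑ j, a j * c j := by
      intro i; rw [Finset.mul_sum]; exact Finset.sum_congr rfl fun j _ => by ring
    rw [Finset.sum_congr rfl fun i _ => this i, ← Finset.sum_mul, ha, zero_mul]
  have key : ∀ i j, |s i - s j| = (s i - m) + (s j - m) - 2 * (min (s i) (s j) - m) := by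
    intro i j
    rcases le_total (s i) (s j) with h | h
    · rw [abs_of_nonpos (by linarith), min_eq_left h]; ring
    · rw [abs_of_nonneg (by linarith), min_eq_right h]; ring
  have expand : ∑ i, ∑ j, a i * a j * |s i - s j|
      = (∑ i, ∑ j, a i * a j * (s i - m)) + (∑ i, ∑ j, a i * a j * (s j - m))
        - 2 * (∑ i, ∑ j, a i * a j * (min (s i) (s j) - m)) := by
    rw [Finset.mul_sum, ← Finset.sum_add_distrib, ← Finset.sum_sub_distrib]
    refine Finset.sum_congr rfl fun i _ => ?_
    rw [Finset.mul_sum, ← Finset.sum_add_distrib, ← Finset.sum_sub_distrib]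
    refine Finset.sum_congr rfl fun j _ => ?_
    rw [key i j]; ring
  rw [expand, h1 (fun i => s i - m), h2 (fun j => s j - m)]
  linarith

theorem slicedW1_cnd {r : ℕ} (Ω : Set (EuclideanSpace ℝ (Fin r))) (hΩ : IsCompact Ω) :
    ∀ (n : ℕ) (P : Fin n → Measure (EuclideanSpace ℝ (Fin r))),
      (∀ i, IsProbabilityMeasure (P i)) → (∀ i, P i Ω = 1) →
      ∀ a : Fin n → ℝ, (∑ i, a i) = 0 →
        (∑ i, ∑ j, a i * a j * slicedW1 (P i) (P j)) ≤ 0 := by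
  intro n P hP hPΩ a ha
  classical
  haveI : ∀ i, IsProbabilityMeasure (P i) := hP
  obtain ⟨R₀, hR₀⟩ := (Metric.isBounded_iff_subset_closedBall 0).1 hΩ.isBounded
  set R : ℝ := max R₀ 0 with hRdef
  have hR0 : (0:ℝ) ≤ R := le_max_right _ _
  have hΩR : Ω ⊆ Metric.closedBall 0 R :=
    hR₀.trans (Metric.closedBall_subset_closedBall (le_max_left _ _))
  have hΩm : MeasurableSet Ω := hΩ.isClosed.measurableSet
  set Sp := Metric.sphere (0 : EuclideanSpace ℝ (Fin r)) 1 with hSp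
  have hmeasθ : ∀ θ : Sp, Measurable fun x : EuclideanSpace ℝ (Fin r) =>
      ⟪x, (θ : EuclideanSpace ℝ (Fin r))⟫ :=
    fun θ => (continuous_id.inner continuous_const).measurable
  set ν : Sp → Fin n → Measure ℝ :=
    fun θ i => (P i).map (fun x => ⟪x, (θ : EuclideanSpace ℝ (Fin r))⟫) with hν
  haveI hprob : ∀ θ i, IsProbabilityMeasure (ν θ i) :=
    fun θ i => Measure.isProbabilityMeasure_map (hmeasθ θ).aemeasurable
  have hbound : ∀ (θ : Sp) y, y ∈ Ω → |⟪y, (θ : EuclideanSpace ℝ (Fin r))⟫| ≤ R := by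
    intro θ y hy
    calc |⟪y, (θ : EuclideanSpace ℝ (Fin r))⟫| ≤ ‖y‖ * ‖(θ : EuclideanSpace ℝ (Fin r))‖ :=
          abs_real_inner_le_norm _ _
    _ = ‖y‖ := by rw [mem_sphere_zero_iff_norm.1 θ.2, mul_one]
    _ ≤ R := by have := hΩR hy; rwa [Metric.mem_closedBall, dist_zero_right] at this
  have hIic : ∀ (θ : Sp) i x, ν θ i (Set.Iic x)
      = P i {y | ⟪y, (θ : EuclideanSpace ℝ (Fin r))⟫ ≤ x} := by
    intro θ i x
    rw [hν]
    rw [Measure.map_apply (hmeasθ θ) measurableSet_Iic]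
    rfl
  have hF1 : ∀ (θ : Sp) i x, R ≤ x → ν θ i (Set.Iic x) = 1 := by
    intro θ i x hx
    refine le_antisymm prob_le_one ?_
    rw [hIic]
    calc (1:ENNReal) = P i Ω := (hPΩ i).symm
    _ ≤ _ := measure_mono fun y hy =>
        le_trans (le_trans (le_abs_self _) (hbound θ y hy)) hx
  have hF0 : ∀ (θ : Sp) i x, x < -R → ν θ i (Set.Iic x) = 0 := by
    intro θ i x hx
    rw [hIic]
    have hsub : {y | ⟪y, (θ : EuclideanSpace ℝ (Fin r))⟫ ≤ x} ⊆ Ωᶜ := by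
      intro y hy hyΩ
      have h1 : -R ≤ ⟪y, (θ : EuclideanSpace ℝ (Fin r))⟫ := neg_le_of_abs_le (hbound θ y hyΩ)
      exact absurd (lt_of_le_of_lt (h1.trans hy) hx) (lt_irrefl _)
    refine le_antisymm ?_ (by positivity)
    calc P i _ ≤ P i Ωᶜ := measure_mono hsub
    _ = 0 := by
        rw [measure_compl hΩm (measure_ne_top _ _), hPΩ i, measure_univ, tsub_self]
  -- quantile facts
  have hmemS : ∀ (θ : Sp) i t, t ≤ 1 → R ∈ {x : ℝ | t ≤ (ν θ i (Set.Iic x)).toReal} := by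
    intro θ i t ht
    simp only [Set.mem_setOf_eq, hF1 θ i R le_rfl]
    simpa using ht
  have hlbS : ∀ (θ : Sp) i t, 0 < t →
      ∀ x ∈ {x : ℝ | t ≤ (ν θ i (Set.Iic x)).toReal}, -R ≤ x := by
    intro θ i t ht x hx
    by_contra hcon
    push_neg at hcon
    rw [Set.mem_setOf_eq, hF0 θ i x hcon] at hx
    simp at hx
    exact absurd (lt_of_lt_of_le ht hx) (lt_irrefl _)
  have hbdd : ∀ (θ : Sp) i t, 0 < t →
      BddBelow {x : ℝ | t ≤ (ν θ i (Set.Iic x)).toReal} :=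
    fun θ i t ht => ⟨-R, fun x hx => hlbS θ i t ht x hx⟩
  have hGIcc : ∀ (θ : Sp) i t, t ∈ Set.Ioc (0:ℝ) 1 →
      invCDF (ν θ i) t ∈ Set.Icc (-R) R := by
    intro θ i t ht
    constructor
    · exact le_csInf ⟨R, hmemS θ i t ht.2⟩ (hlbS θ i t ht.1)
    · exact csInf_le (hbdd θ i t ht.1) (hmemS θ i t ht.2)
  have hmono : ∀ (θ : Sp) i, Monotone fun y : ℝ => ((ν θ i) (Set.Iic y)).toReal := by
    intro θ i u v huv
    exact ENNReal.toReal_mono (measure_ne_top _ _)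
      (measure_mono (Set.Iic_subset_Iic.2 huv))
  have hGle : ∀ (θ : Sp) i, ∀ t ∈ Set.Ioc (0:ℝ) 1, ∀ x : ℝ,
      (invCDF (ν θ i) t ≤ x ↔ t ≤ ((ν θ i) (Set.Iic x)).toReal) := by
    intro θ i t ht x
    haveI := hprob θ i
    have hcdf : ∀ y, (ProbabilityTheory.cdf (ν θ i)) y = ((ν θ i) (Set.Iic y)).toReal :=
      fun y => ProbabilityTheory.cdf_eq_real (μ := ν θ i) y
    constructor
    · intro hGx
      have hF_inv : t ≤ ((ν θ i) (Set.Iic (invCDF (ν θ i) t))).toReal := by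
        rw [← hcdf]
        refine ge_of_tendsto (((ProbabilityTheory.cdf (ν θ i)).right_continuous _).mono
          Set.Ioi_subset_Ici_self) ?_
        filter_upwards [self_mem_nhdsWithin] with y hy
        obtain ⟨s, hsS, hsy⟩ := (csInf_lt_iff (hbdd θ i t ht.1)
          ⟨R, hmemS θ i t ht.2⟩).1 hy
        calc t ≤ ((ν θ i) (Set.Iic s)).toReal := hsS
        _ = (ProbabilityTheory.cdf (ν θ i)) s := (hcdf s).symm
        _ ≤ _ := (ProbabilityTheory.cdf (ν θ i)).mono hsy.le
      exact le_trans hF_inv (hmono θ i hGx)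
    · intro hx
      exact csInf_le (hbdd θ i t ht.1) hx
  -- joint measurability
  set G : Fin n → Sp × ℝ → ℝ :=
    fun i p => if p.2 ∈ Set.Ioc (0:ℝ) 1 then invCDF (ν p.1 i) p.2 else 0 with hG
  have hFθmeas : ∀ i (x : ℝ), Measurable fun θ : Sp => ((ν θ i) (Set.Iic x)).toReal := by
    intro i x
    have hs : MeasurableSet {p : Sp × EuclideanSpace ℝ (Fin r) |
        ⟪p.2, (p.1 : EuclideanSpace ℝ (Fin r))⟫ ≤ x} := by
      have hc : Continuous fun p : Sp × EuclideanSpace ℝ (Fin r) =>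
          ⟪p.2, (p.1 : EuclideanSpace ℝ (Fin r))⟫ :=
        continuous_snd.inner (continuous_subtype_val.comp continuous_fst)
      exact measurableSet_le hc.measurable measurable_const
    have hmm := (measurable_measure_prodMk_left (ν := P i) hs).ennreal_toReal
    have heq : (fun θ : Sp => ((ν θ i) (Set.Iic x)).toReal)
        = fun θ : Sp => (P i (Prod.mk θ ⁻¹' {p : Sp × EuclideanSpace ℝ (Fin r) |
            ⟪p.2, (p.1 : EuclideanSpace ℝ (Fin r))⟫ ≤ x})).toReal := by
      funext θ
      rw [hIic]
      rfl
    rw [heq]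
    exact hmm
  have hGmeas : ∀ i, Measurable (G i) := by
    intro i
    apply measurable_of_Iic
    intro x
    have hset : G i ⁻¹' Set.Iic x =
        ((Prod.snd ⁻¹' Set.Ioc (0:ℝ) 1) ∩
          {p : Sp × ℝ | p.2 ≤ ((ν p.1 i) (Set.Iic x)).toReal})
        ∪ ((Prod.snd ⁻¹' Set.Ioc (0:ℝ) 1)ᶜ ∩ {_p : Sp × ℝ | (0:ℝ) ≤ x}) := by
      ext ⟨θ, t⟩
      by_cases htIoc : t ∈ Set.Ioc (0:ℝ) 1
      · simp only [hG, Set.mem_preimage, Set.mem_Iic, if_pos htIoc, Set.mem_union,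
          Set.mem_inter_iff, Set.mem_setOf_eq, Set.mem_compl_iff, htIoc, not_true,
          false_and, or_false, true_and]
        exact hGle θ i t htIoc x
      · have htIoc' : ¬(0 < t ∧ t ≤ 1) := by simpa [Set.mem_Ioc] using htIoc
        simp [hG, htIoc, htIoc']
    rw [hset]
    exact ((measurable_snd measurableSet_Ioc).inter
        (measurableSet_le measurable_snd ((hFθmeas i x).comp measurable_fst))).union
      (((measurable_snd measurableSet_Ioc).compl).inter (MeasurableSet.const _))
  have hGbdd : ∀ i (p : Sp × ℝ), |G i p| ≤ R := by
    rintro i ⟨θ, t⟩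
    by_cases h : t ∈ Set.Ioc (0:ℝ) 1
    · have := hGIcc θ i t h
      simp only [hG, if_pos h]
      exact abs_le.2 ⟨this.1, this.2⟩
    · simp only [hG, if_neg h, abs_zero]
      exact hR0
  set K : Fin n → Fin n → Sp × ℝ → ℝ :=
    fun i j p => (Set.Ioc (0:ℝ) 1).indicator (fun _ => (1:ℝ)) p.2 * |G i p - G j p| with hK
  have hKmeas : ∀ i j, Measurable (K i j) :=
    fun i j => ((measurable_const.indicator measurableSet_Ioc).comp measurable_snd).mul
      (((hGmeas i).sub (hGmeas j)).abs)
  have hKsec : ∀ i j (θ : Sp) (t : ℝ), K i j (θ, t)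
      = (Set.Ioc (0:ℝ) 1).indicator
          (fun u => |invCDF (ν θ i) u - invCDF (ν θ j) u|) t := by
    intro i j θ t
    by_cases h : t ∈ Set.Ioc (0:ℝ) 1
    · have h' : 0 < t ∧ t ≤ 1 := by simpa [Set.mem_Ioc] using h
      simp [hK, hG, Set.indicator_of_mem, h, h']
    · have h' : ¬(0 < t ∧ t ≤ 1) := by simpa [Set.mem_Ioc] using h
      simp [hK, hG, Set.indicator_of_notMem, h, h']
  set h : Fin n → Fin n → Sp → ℝ := fun i j θ =>
    ∫ t in Set.Ioc (0:ℝ) 1, |invCDF (ν θ i) t - invCDF (ν θ j) t| with hh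
  have hinner_eq : ∀ i j (θ : Sp), h i j θ = ∫ t, K i j (θ, t) := by
    intro i j θ
    rw [hh]
    simp only
    rw [← integral_indicator measurableSet_Ioc]
    exact integral_congr_ae (Filter.Eventually.of_forall fun t => (hKsec i j θ t).symm)
  haveI hfinIoc : IsFiniteMeasure (volume.restrict (Set.Ioc (0:ℝ) 1)) := by
    constructor
    rw [Measure.restrict_apply_univ, Real.volume_Ioc]
    exact ENNReal.ofReal_lt_top
  have hKbdd : ∀ i j (p : Sp × ℝ), ‖K i j p‖ ≤ 2 * R := by
    intro i j p
    rw [Real.norm_eq_abs, hK]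
    simp only
    have h2 : |G i p - G j p| ≤ 2 * R := by
      calc |G i p - G j p| ≤ |G i p| + |G j p| := abs_sub _ _
      _ ≤ R + R := add_le_add (hGbdd i p) (hGbdd j p)
      _ = 2 * R := by ring
    by_cases hp : p.2 ∈ Set.Ioc (0:ℝ) 1
    · rw [Set.indicator_of_mem hp, one_mul, abs_abs]
      exact h2
    · rw [Set.indicator_of_notMem hp, zero_mul, abs_zero]
      linarith
  have hint_t : ∀ i j (θ : Sp),
      IntegrableOn (fun t => |invCDF (ν θ i) t - invCDF (ν θ j) t|) (Set.Ioc (0:ℝ) 1) := by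
    intro i j θ
    have hKθ : Measurable fun t => K i j (θ, t) := (hKmeas i j).comp measurable_prodMk_left
    have hint : Integrable (fun t => K i j (θ, t)) (volume.restrict (Set.Ioc (0:ℝ) 1)) :=
      ⟨hKθ.aestronglyMeasurable,
        HasFiniteIntegral.of_bounded (C := 2 * R) (ae_of_all _ fun t => hKbdd i j (θ, t))⟩
    refine hint.congr ?_
    refine (ae_restrict_iff' measurableSet_Ioc).2 (ae_of_all _ fun t htt => ?_)
    simp only [hKsec, Set.indicator_of_mem htt]
  have hbnd_h : ∀ i j (θ : Sp), ‖h i j θ‖ ≤ 2 * R := by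
    intro i j θ
    rw [hh]
    simp only
    have := norm_setIntegral_le_of_norm_le_const (μ := volume) (s := Set.Ioc (0:ℝ) 1)
      (C := 2 * R)
      (by rw [Real.volume_Ioc]; exact ENNReal.ofReal_lt_top)
      (f := fun t => |invCDF (ν θ i) t - invCDF (ν θ j) t|) ?_
    · calc ‖∫ t in Set.Ioc (0:ℝ) 1, |invCDF (ν θ i) t - invCDF (ν θ j) t|‖
          ≤ 2 * R * (volume (Set.Ioc (0:ℝ) 1)).toReal := this
      _ = 2 * R := by
          rw [Real.volume_Ioc]
          norm_num
    · intro t htt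
      have h1 := hGIcc θ i t htt
      have h2 := hGIcc θ j t htt
      rw [Real.norm_eq_abs, abs_abs]
      have := abs_le.2 ⟨h1.1, h1.2⟩
      have := abs_le.2 ⟨h2.1, h2.2⟩
      calc |invCDF (ν θ i) t - invCDF (ν θ j) t|
          ≤ |invCDF (ν θ i) t| + |invCDF (ν θ j) t| := abs_sub _ _
      _ ≤ 2 * R := by
          have e1 : |invCDF (ν θ i) t| ≤ R := abs_le.2 ⟨h1.1, h1.2⟩
          have e2 : |invCDF (ν θ j) t| ≤ R := abs_le.2 ⟨h2.1, h2.2⟩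
          linarith
  have hhmeas : ∀ i j, Measurable (h i j) := by
    intro i j
    have : h i j = fun θ => ∫ t, K i j (θ, t) := funext (hinner_eq i j)
    rw [this]
    exact ((hKmeas i j).stronglyMeasurable.integral_prod_right').measurable
  haveI hfinSph : IsFiniteMeasure (uniformSphere r) := by
    constructor
    rw [uniformSphere, Measure.smul_apply, smul_eq_mul]
    set c := (volume : Measure (EuclideanSpace ℝ (Fin r))).toSphere Set.univ with hc
    have : c⁻¹ * c ≤ 1 := by
      rcases eq_or_ne c 0 with h0 | h0
      · simp [h0]
      rcases eq_or_ne c ⊤ with hT | hT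
      · simp [hT]
      · rw [ENNReal.inv_mul_cancel h0 hT]
    exact lt_of_le_of_lt this ENNReal.one_lt_top
  have hint_θ : ∀ i j, Integrable (h i j) (uniformSphere r) :=
    fun i j => ⟨(hhmeas i j).aestronglyMeasurable,
      HasFiniteIntegral.of_bounded (C := 2 * R) (ae_of_all _ fun θ => hbnd_h i j θ)⟩
  have hsliced : ∀ i j, slicedW1 (P i) (P j) = ∫ θ, h i j θ ∂(uniformSphere r) :=
    fun i j => rfl
  calc ∑ i, ∑ j, a i * a j * slicedW1 (P i) (P j)
      = ∑ i, ∑ j, ∫ θ, a i * a j * h i j θ ∂(uniformSphere r) := by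
        refine Finset.sum_congr rfl fun i _ => Finset.sum_congr rfl fun j _ => ?_
        rw [hsliced, integral_const_mul]
  _ = ∫ θ, (∑ i, ∑ j, a i * a j * h i j θ) ∂(uniformSphere r) := by
        rw [integral_finset_sum _
          (fun i _ => integrable_finset_sum _ fun j _ => (hint_θ i j).const_mul _)]
        refine Finset.sum_congr rfl fun i _ => ?_
        rw [integral_finset_sum _ (fun j _ => (hint_θ i j).const_mul _)]
  _ ≤ 0 := by
        refine integral_nonpos fun θ => ?_
        have hswap : ∑ i, ∑ j, a i * a j * h i j θ
            = ∫ t in Set.Ioc (0:ℝ) 1,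
                (∑ i, ∑ j, a i * a j * |invCDF (ν θ i) t - invCDF (ν θ j) t|) := by
          rw [integral_finset_sum _
            (fun i _ => integrable_finset_sum _ fun j _ => (hint_t i j θ).const_mul _)]
          refine Finset.sum_congr rfl fun i _ => ?_
          rw [integral_finset_sum _ (fun j _ => (hint_t i j θ).const_mul _)]
          refine Finset.sum_congr rfl fun j _ => ?_
          rw [hh]
          simp only
          rw [integral_const_mul]
        rw [hswap]
        exact integral_nonpos fun t => abs_cnd (fun i => invCDF (ν θ i) t) a ha
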